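/- arXiv:1512.02240 — 4 statements merged into one kernel-verified Lean document; each statement's English description precedes it below -/
import Mathlib

section
/- If χ₁ and χ₂ are causality functions on a partially ordered set T, then the map χ_new defined on cuts of T by χ_new(C) := χ₁(C) ∪ χ₂(C) is also a causality function on T (it satisfies all four defining conditions: finite-union homomorphism, monotonicity, strict decrease on nonempty bounded cuts, and finite reachability). -/
def IsCut {T : Type*} [PartialOrder T] (C : Set T) : Prop := IsLowerSet C

def IsBoundedCut {T : Type*} [PartialOrder T] (C : Set T) : Prop :=
  IsLowerSet C ∧ ∃ t : T, C ⊆ {s | s ≤ t}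

def IsCausalityFunction {T : Type*} [PartialOrder T] (χ : Set T → Set T) : Prop :=
  (∀ C : Set T, IsCut C → IsCut (χ C)) ∧
  (∀ C D : Set T, IsCut C → IsCut D → χ (C ∪ D) = χ C ∪ χ D) ∧
  (∀ C D : Set T, IsCut C → IsCut D → C ⊆ D → χ C ⊆ χ D) ∧
  (∀ C : Set T, IsBoundedCut C → C.Nonempty → χ C ⊂ C) ∧
  (∀ C : Set T, IsBoundedCut C → ∀ t ∈ C, ∃ n : ℕ, t ∉ χ^[n] C)

section Aux

variable {T : Type*} [PartialOrder T]

lemma cf_cut_iter {χ : Set T → Set T} (h : IsCausalityFunction χ) :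
    ∀ n (C : Set T), IsCut C → IsCut (χ^[n] C) := by
  intro n
  induction n with
  | zero => intro C hC; simpa using hC
  | succ n ih =>
    intro C hC
    rw [Function.iterate_succ_apply]
    exact ih _ (h.1 C hC)

lemma cf_mono_iter {χ : Set T → Set T} (h : IsCausalityFunction χ) :
    ∀ n (C D : Set T), IsCut C → IsCut D → C ⊆ D → χ^[n] C ⊆ χ^[n] D := by
  intro n
  induction n with
  | zero => intro C D _ _ hCD; simpa using hCD
  | succ n ih =>
    intro C D hC hD hCD
    rw [Function.iterate_succ_apply, Function.iterate_succ_apply]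
    exact ih _ _ (h.1 C hC) (h.1 D hD) (h.2.2.1 C D hC hD hCD)

lemma cf_empty {χ : Set T → Set T} (h : IsCausalityFunction χ) (x : T) :
    χ (∅ : Set T) = ∅ := by
  by_contra hne
  obtain ⟨y, hy⟩ := Set.nonempty_iff_ne_empty.2 hne
  set D : Set T := {s | s ≤ y} with hDdef
  have hDcut : IsCut D := fun a b hba ha => le_trans hba ha
  have hDb : IsBoundedCut D := ⟨hDcut, y, le_refl _⟩
  have hyD : y ∈ D := le_refl y
  obtain ⟨n, hn⟩ := h.2.2.2.2 D hDb y hyD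
  -- show y ∈ χ^[n] D
  have hemptycut : IsCut (∅ : Set T) := fun a b _ ha => absurd ha (Set.notMem_empty a)
  have key : ∀ k, χ (∅ : Set T) ⊆ χ^[k+1] (∅ : Set T) := by
    intro k
    rw [Function.iterate_succ_apply']
    exact h.2.2.1 _ _ hemptycut (cf_cut_iter h k _ hemptycut) (Set.empty_subset _)
  have : y ∈ χ^[n] D := by
    cases n with
    | zero => simpa using hyD
    | succ m =>
      have h1 : y ∈ χ^[m+1] (∅ : Set T) := key m hy
      exact cf_mono_iter h (m+1) _ _ hemptycut hDcut (Set.empty_subset _) h1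
  exact hn this

lemma cf_subset {χ : Set T → Set T} (h : IsCausalityFunction χ) {C : Set T}
    (hC : IsBoundedCut C) : χ C ⊆ C := by
  rcases Set.eq_empty_or_nonempty C with rfl | hne
  · obtain ⟨t, _⟩ := hC.2
    rw [cf_empty h t]
  · exact (h.2.2.2.1 C hC hne).subset

lemma cf_bounded {χ : Set T → Set T} (h : IsCausalityFunction χ) {C : Set T}
    (hC : IsBoundedCut C) : IsBoundedCut (χ C) := by
  obtain ⟨t, ht⟩ := hC.2
  exact ⟨h.1 C hC.1, t, (cf_subset h hC).trans ht⟩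

lemma cf_iter_subset {χ : Set T → Set T} (h : IsCausalityFunction χ) :
    ∀ n {C : Set T}, IsBoundedCut C → χ^[n] C ⊆ C := by
  intro n
  induction n with
  | zero => intro C _; simp
  | succ n ih =>
    intro C hC
    rw [Function.iterate_succ_apply]
    exact (ih (cf_bounded h hC)).trans (cf_subset h hC)

end Aux

section Main

variable {T : Type*} [PartialOrder T] {χ₁ χ₂ : Set T → Set T}

lemma union_cut (h₁ : IsCausalityFunction χ₁) (h₂ : IsCausalityFunction χ₂) :
    ∀ C : Set T, IsCut C → IsCut ((fun C => χ₁ C ∪ χ₂ C) C) :=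
  fun C hC => (h₁.1 C hC).union (h₂.1 C hC)

lemma union_hom_iter (h₁ : IsCausalityFunction χ₁) (h₂ : IsCausalityFunction χ₂) :
    ∀ n (C D : Set T), IsCut C → IsCut D →
      (fun C => χ₁ C ∪ χ₂ C)^[n] (C ∪ D) =
        (fun C => χ₁ C ∪ χ₂ C)^[n] C ∪ (fun C => χ₁ C ∪ χ₂ C)^[n] D := by
  intro n
  induction n with
  | zero => intro C D _ _; simp
  | succ n ih =>
    intro C D hC hD
    rw [Function.iterate_succ_apply, Function.iterate_succ_apply,
      Function.iterate_succ_apply]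
    have e : χ₁ (C ∪ D) ∪ χ₂ (C ∪ D) =
        (χ₁ C ∪ χ₂ C) ∪ (χ₁ D ∪ χ₂ D) := by
      rw [h₁.2.1 C D hC hD, h₂.2.1 C D hC hD]
      exact Set.union_union_union_comm _ _ _ _
    show (fun C => χ₁ C ∪ χ₂ C)^[n] (χ₁ (C ∪ D) ∪ χ₂ (C ∪ D)) = _
    rw [e]
    exact ih _ _ (union_cut h₁ h₂ C hC) (union_cut h₁ h₂ D hD)

lemma union_bounded (h₁ : IsCausalityFunction χ₁) (h₂ : IsCausalityFunction χ₂)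
    {C : Set T} (hC : IsBoundedCut C) : IsBoundedCut ((fun C => χ₁ C ∪ χ₂ C) C) := by
  obtain ⟨t, ht⟩ := hC.2
  refine ⟨(h₁.1 C hC.1).union (h₂.1 C hC.1), t, ?_⟩
  exact (Set.union_subset (cf_subset h₁ hC) (cf_subset h₂ hC)).trans ht

lemma union_key (h₁ : IsCausalityFunction χ₁) (h₂ : IsCausalityFunction χ₂) :
    ∀ n a b, n = a + b → ∀ C : Set T, IsBoundedCut C → ∀ t,
      t ∉ χ₁^[a] C → t ∉ χ₂^[b] C → t ∉ (fun C => χ₁ C ∪ χ₂ C)^[n] C := by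
  set χ := fun C : Set T => χ₁ C ∪ χ₂ C with hχ
  have hχsub : ∀ {C : Set T}, IsBoundedCut C → χ C ⊆ C :=
    fun hC => Set.union_subset (cf_subset h₁ hC) (cf_subset h₂ hC)
  have hχitersub : ∀ n {C : Set T}, IsBoundedCut C → χ^[n] C ⊆ C := by
    intro n
    induction n with
    | zero => intro C _; simp
    | succ n ih =>
      intro C hC
      rw [Function.iterate_succ_apply]
      exact (ih (union_bounded h₁ h₂ hC)).trans (hχsub hC)
  intro n
  induction n with
  | zero =>
    intro a b hab C hC t ht1 _
    obtain rfl : a = 0 := by omega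
    simpa using ht1
  | succ n ih =>
    intro a b hab C hC t ht1 ht2
    -- if a = 0 or b = 0, t ∉ C
    rcases Nat.eq_zero_or_pos a with rfl | ha
    · exact fun hmem => ht1 (by simpa using hχitersub (n+1) hC hmem)
    rcases Nat.eq_zero_or_pos b with rfl | hb
    · exact fun hmem => ht2 (by simpa using hχitersub (n+1) hC hmem)
    obtain ⟨a', rfl⟩ := Nat.exists_eq_succ_of_ne_zero ha.ne'
    obtain ⟨b', rfl⟩ := Nat.exists_eq_succ_of_ne_zero hb.ne'
    have h1b : IsBoundedCut (χ₁ C) := cf_bounded h₁ hC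
    have h2b : IsBoundedCut (χ₂ C) := cf_bounded h₂ hC
    rw [Function.iterate_succ_apply]
    have : χ C = χ₁ C ∪ χ₂ C := rfl
    rw [this, union_hom_iter h₁ h₂ n _ _ h1b.1 h2b.1]
    intro hmem
    rcases hmem with hmem | hmem
    · -- use decomposition (a', b'+1), n = a' + (b'+1)
      refine ih a' (b'+1) (by omega) (χ₁ C) h1b t ?_ ?_ hmem
      · rw [← Function.iterate_succ_apply]; exact ht1
      · intro hx
        exact ht2 (cf_mono_iter h₂ (b'+1) _ _ h1b.1 hC.1 (cf_subset h₁ hC) hx)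
    · -- use decomposition (a'+1, b'), n = (a'+1) + b'
      refine ih (a'+1) b' (by omega) (χ₂ C) h2b t ?_ ?_ hmem
      · intro hx
        exact ht1 (cf_mono_iter h₁ (a'+1) _ _ h2b.1 hC.1 (cf_subset h₂ hC) hx)
      · rw [← Function.iterate_succ_apply]; exact ht2

end Main

/-- The union of two causality functions is again a causality function. -/
theorem isCausalityFunction_union {T : Type*} [PartialOrder T]
    (χ₁ χ₂ : Set T → Set T)
    (h₁ : IsCausalityFunction χ₁) (h₂ : IsCausalityFunction χ₂) :
    IsCausalityFunction (fun C => χ₁ C ∪ χ₂ C) := by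
  have hreach : ∀ C : Set T, IsBoundedCut C → ∀ t ∈ C,
      ∃ n : ℕ, t ∉ (fun C => χ₁ C ∪ χ₂ C)^[n] C := by
    intro C hC t ht
    obtain ⟨a, ha⟩ := h₁.2.2.2.2 C hC t ht
    obtain ⟨b, hb⟩ := h₂.2.2.2.2 C hC t ht
    exact ⟨a + b, union_key h₁ h₂ (a+b) a b rfl C hC t ha hb⟩
  refine ⟨union_cut h₁ h₂, ?_, ?_, ?_, hreach⟩
  · intro C D hC hD
    show χ₁ (C ∪ D) ∪ χ₂ (C ∪ D) = _
    rw [h₁.2.1 C D hC hD, h₂.2.1 C D hC hD]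
    exact Set.union_union_union_comm _ _ _ _
  · intro C D hC hD hCD
    exact Set.union_subset_union (h₁.2.2.1 C D hC hD hCD) (h₂.2.2.1 C D hC hD hCD)
  · intro C hC hne
    have hsub : χ₁ C ∪ χ₂ C ⊆ C := Set.union_subset (cf_subset h₁ hC) (cf_subset h₂ hC)
    refine ⟨hsub, fun hle => ?_⟩
    have heq : (fun C => χ₁ C ∪ χ₂ C) C = C := le_antisymm hsub hle
    obtain ⟨t, ht⟩ := hne
    obtain ⟨n, hn⟩ := hreach C hC t ht
    exact hn (by rw [Function.iterate_fixed (f := fun C => χ₁ C ∪ χ₂ C) heq]; exact ht)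
end

section
/- Let T be a subset of ℝ and let χ : T → T be a monotone function (t ≤ u implies χ(t) ≤ χ(u)). Suppose that for every u ∈ T there exists δ > 0 such that t − χ(t) > δ for all t ∈ T with t ≤ u (in particular χ(t) < t for all t ∈ T). Then for all t, t' ∈ T there exists n ∈ ℕ such that χⁿ(t') ≤ t, where χⁿ denotes the n-fold iterate of χ. -/
/-- For a subset `T ⊆ ℝ` and a monotone `χ : T → T` which is uniformly
strictly decreasing below every point of `T`, any point `t ∈ T` is reached
from any `t' ∈ T` in a finite number of causal steps. -/
theorem iterate_le_of_uniform_delay (T : Set ℝ) (χ : T → T)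
    (hmono : Monotone χ)
    (hdelay : ∀ u : T, ∃ δ > (0 : ℝ), ∀ t : T, t ≤ u → (t : ℝ) - (χ t : ℝ) > δ) :
    ∀ t t' : T, ∃ n : ℕ, χ^[n] t' ≤ t := by
  intro t t'
  obtain ⟨δ, hδ, hstep⟩ := hdelay t'
  have hself : ∀ x : T, χ x ≤ x := by
    intro x
    obtain ⟨δ', hδ', h⟩ := hdelay x
    have hx := h x le_rfl
    have : (χ x : ℝ) ≤ x := by linarith
    exact_mod_cast this
  have hle : ∀ n, χ^[n] t' ≤ t' := by
    intro n
    induction n with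
    | zero => simp
    | succ n ih =>
      rw [Function.iterate_succ_apply']
      exact le_trans (hself _) ih
  by_contra hcon
  push_neg at hcon
  have hlt : ∀ n, (t : ℝ) < (χ^[n] t' : ℝ) := fun n => by exact_mod_cast hcon n
  have key : ∀ n, (χ^[n] t' : ℝ) ≤ (t' : ℝ) - n * δ := by
    intro n
    induction n with
    | zero => simp
    | succ n ih =>
      rw [Function.iterate_succ_apply']
      have h := hstep (χ^[n] t') (hle n)
      push_cast
      linarith
  obtain ⟨n, hn⟩ := Archimedean.arch ((t' : ℝ) - t) hδ
  have h1 := key n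
  have h2 := hlt n
  simp [nsmul_eq_mul] at hn
  linarith
end

section
/- Let T be a subset of ℝ and let χ : T → T be a monotone function such that for every u ∈ T there exists δ > 0 with t − χ(t) > δ for all t ∈ T with t ≤ u. Suppose in addition that there exists t₀ ∈ T such that χ(t) ≤ t₀ for all t ∈ T (this holds in particular when T has a greatest element). Then for every t ∈ T there exists n ∈ ℕ such that χⁿ(t') < t for all t' ∈ T, where χⁿ denotes the n-fold iterate of χ. -/
/-- For a subset `T ⊆ ℝ` and a monotone `χ : T → T` which is uniformly
strictly decreasing below every point of `T` and whose range is bounded above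
by a point `t₀ ∈ T`, every point `t ∈ T` is reached from anywhere in a
uniformly finite number of causal steps. -/
theorem iterate_lt_of_uniform_delay_of_bounded_range (T : Set ℝ) (χ : T → T)
    (hmono : Monotone χ)
    (hdelay : ∀ u : T, ∃ δ > (0 : ℝ), ∀ t : T, t ≤ u → (t : ℝ) - (χ t : ℝ) > δ)
    (t₀ : T) (hb : ∀ t : T, χ t ≤ t₀) :
    ∀ t : T, ∃ n : ℕ, ∀ t' : T, χ^[n] t' < t := by
  intro t
  obtain ⟨δ, hδ, hd⟩ := hdelay t₀
  have key : ∀ (k : ℕ) (t' : T), (χ^[k+1] t' : ℝ) ≤ (t₀ : ℝ) - k * δ := by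
    intro k
    induction k with
    | zero =>
      intro t'
      simp only [Nat.cast_zero, zero_mul, sub_zero, Function.iterate_one]
      exact_mod_cast hb t'
    | succ k ih =>
      intro t'
      have h1 : (χ^[k+1] t' : ℝ) ≤ (t₀ : ℝ) - k * δ := ih t'
      have h2 : χ^[k+1] t' ≤ t₀ := by
        rw [Function.iterate_succ_apply']
        exact hb _
      have h3 : (χ^[k+1] t' : ℝ) - (χ (χ^[k+1] t') : ℝ) > δ := hd _ h2
      have h4 : χ^[k+1+1] t' = χ (χ^[k+1] t') := Function.iterate_succ_apply' χ (k+1) t'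
      rw [h4]
      push_cast
      linarith
  obtain ⟨N, hN⟩ := Archimedean.arch ((t₀ : ℝ) - t + 1) hδ
  refine ⟨N + 1, fun t' => ?_⟩
  have h := key N t'
  have hNδ : (t₀ : ℝ) - (t : ℝ) + 1 ≤ N * δ := by
    simpa [nsmul_eq_mul] using hN
  have : (χ^[N+1] t' : ℝ) < t := by linarith
  exact_mod_cast this
end

section
/- Let α, β, γ, δ be finite types and let Φ : Matrix (α×β) (α×β) ℂ →ₗ Matrix (γ×δ) (γ×δ) ℂ and Ψ : Matrix α α ℂ →ₗ Matrix γ γ ℂ be linear maps. Then the following are equivalent: (1) Tr_δ(Φ(ρ)) = Ψ(Tr_β(ρ)) for every ρ ∈ Matrix (α×β) (α×β) ℂ (i.e., the output on system C does not depend on the input on system B); (2) the partial trace over δ of the Choi matrix of Φ equals the reindexing, along the natural bijection γ × (α×β) ≃ (γ×α) × β, of R_Ψ ⊗ I_β, where R_Ψ is the Choi matrix of Ψ and I_β is the identity matrix indexed by β. -/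
open Kronecker

/-- The partial trace over the second tensor factor of a matrix indexed by a
product type. -/
noncomputable def ptrace {σ τ : Type*} [Fintype τ]
    (M : Matrix (σ × τ) (σ × τ) ℂ) : Matrix σ σ ℂ :=
  Matrix.of fun s s' => ∑ t : τ, M (s, t) (s', t)

/-- The Choi matrix `R_Θ = ∑_{x,y} Θ(E_{xy}) ⊗ E_{xy}` of a linear map `Θ` on
matrices. -/
noncomputable def choi {μ ν : Type*} [Fintype μ] [DecidableEq μ]
    (Θ : Matrix μ μ ℂ →ₗ[ℂ] Matrix ν ν ℂ) : Matrix (ν × μ) (ν × μ) ℂ :=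
  ∑ x : μ, ∑ y : μ,
    (Θ (Matrix.single x y 1)) ⊗ₖ (Matrix.single x y 1)

lemma choi_apply {μ ν : Type*} [Fintype μ] [DecidableEq μ]
    (Θ : Matrix μ μ ℂ →ₗ[ℂ] Matrix ν ν ℂ) (n n' : ν) (x x' : μ) :
    choi Θ (n, x) (n', x') = Θ (Matrix.single x x' 1) n n' := by
  simp [choi, Matrix.sum_apply, Matrix.single, Matrix.kroneckerMap_apply,
    Finset.sum_ite_eq, ite_and]

lemma ptrace_smul {σ τ : Type*} [Fintype τ] (c : ℂ) (M : Matrix (σ × τ) (σ × τ) ℂ) :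
    ptrace (c • M) = c • ptrace M := by
  ext s s'; simp [ptrace, Finset.mul_sum]

lemma ptrace_sum {σ τ ι : Type*} [Fintype τ] (s : Finset ι)
    (f : ι → Matrix (σ × τ) (σ × τ) ℂ) :
    ptrace (∑ i ∈ s, f i) = ∑ i ∈ s, ptrace (f i) := by
  ext a b
  simp only [ptrace, Matrix.of_apply, Matrix.sum_apply]
  exact Finset.sum_comm

lemma ptrace_stdBasisMatrix {σ τ : Type*} [Fintype τ] [DecidableEq σ] [DecidableEq τ]
    (a a' : σ) (b b' : τ) :
    ptrace (Matrix.single (a, b) (a', b') (1 : ℂ)) =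
      if b = b' then Matrix.single a a' 1 else 0 := by
  ext s s'
  simp [ptrace, Matrix.single, Prod.ext_iff, ite_and, Finset.sum_ite_eq]
  split_ifs <;> simp_all

/-- A linear map `Φ` on matrices over `α × β` with output over `γ × δ` satisfies
`Tr_δ ∘ Φ = Ψ ∘ Tr_β` if and only if the partial trace over `δ` of the Choi
matrix of `Φ` equals the reindexing along `γ × (α × β) ≃ (γ × α) × β` of
`R_Ψ ⊗ I_β`. -/
theorem ptrace_comp_iff_choi_ptrace_eq
    {α β γ δ : Type*} [Fintype α] [DecidableEq α] [Fintype β] [DecidableEq β]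
    [Fintype γ] [Fintype δ]
    (Φ : Matrix (α × β) (α × β) ℂ →ₗ[ℂ] Matrix (γ × δ) (γ × δ) ℂ)
    (Ψ : Matrix α α ℂ →ₗ[ℂ] Matrix γ γ ℂ) :
    (∀ ρ : Matrix (α × β) (α × β) ℂ, ptrace (Φ ρ) = Ψ (ptrace ρ)) ↔
    (Matrix.of fun (p q : γ × (α × β)) =>
        ∑ d : δ, choi Φ ((p.1, d), p.2) ((q.1, d), q.2)) =
      Matrix.reindex (Equiv.prodAssoc γ α β) (Equiv.prodAssoc γ α β)
        (choi Ψ ⊗ₖ (1 : Matrix β β ℂ)) := by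
  have key : ∀ (c c' : γ) (a a' : α) (b b' : β),
      (Matrix.reindex (Equiv.prodAssoc γ α β) (Equiv.prodAssoc γ α β)
        (choi Ψ ⊗ₖ (1 : Matrix β β ℂ))) (c, (a, b)) (c', (a', b')) =
      (Ψ (if b = b' then Matrix.single a a' 1 else 0)) c c' := by
    intro c c' a a' b b'
    simp [Matrix.reindex_apply, Equiv.prodAssoc, Matrix.kroneckerMap_apply,
      choi_apply, Matrix.one_apply]
    split_ifs <;> simp
  have lhs_entry : ∀ (c c' : γ) (a a' : α) (b b' : β),
      (∑ d : δ, choi Φ ((c, d), (a, b)) ((c', d), (a', b'))) =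
      ptrace (Φ (Matrix.single (a, b) (a', b') 1)) c c' := by
    intro c c' a a' b b'
    simp [ptrace, choi_apply]
  constructor
  · intro h
    ext ⟨c, a, b⟩ ⟨c', a', b'⟩
    rw [Matrix.of_apply, lhs_entry, key, h, ptrace_stdBasisMatrix]
  · intro h ρ
    have basis : ∀ (a a' : α) (b b' : β),
        ptrace (Φ (Matrix.single (a, b) (a', b') 1)) =
        Ψ (ptrace (Matrix.single (a, b) (a', b') 1)) := by
      intro a a' b b'
      ext c c'
      rw [← lhs_entry, ← Matrix.of_apply (fun (p q : γ × (α × β)) =>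
        ∑ d : δ, choi Φ ((p.1, d), p.2) ((q.1, d), q.2)) (c, (a, b)) (c', (a', b')), h,
        key, ptrace_stdBasisMatrix]
    conv_lhs => rw [Matrix.matrix_eq_sum_single ρ]
    conv_rhs => rw [Matrix.matrix_eq_sum_single ρ]
    simp only [map_sum, ptrace_sum]
    refine Finset.sum_congr rfl fun p _ => Finset.sum_congr rfl fun q _ => ?_
    have e : Matrix.single p q (ρ p q) = ρ p q • Matrix.single p q (1 : ℂ) := by
      rw [Matrix.smul_single, smul_eq_mul, mul_one]
    rw [e, map_smul, ptrace_smul, ptrace_smul, map_smul, basis p.1 q.1 p.2 q.2]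
end
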